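/- Consider the planar system ẍ + Ωẏ = −V_x, ÿ − Ωẋ = −V_y with V = Ax + By − a(x²+y²)[C + bx + ½a(5x²+y²)] and Ω = 6ax + b. Then I = a[2(xẏ − yẋ) − (4ax+b)(x²+y²)]·[ẏ − C − bx − a(3x²+y²)] + A[ẏ − bx − a(3x²+y²)] − B[ẋ + y(b+2ax)] is a first integral: dI/dt = 0 along all solutions. -/

import Mathlib

lemma derivV1 (a b A B C Y X : ℝ) :
    deriv (fun u => A * u + B * Y
        - a * (u ^ 2 + Y ^ 2) * (C + b * u + (1 / 2) * a * (5 * u ^ 2 + Y ^ 2))) X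
      = A - a * (2 * X) * (C + b * X + (1 / 2) * a * (5 * X ^ 2 + Y ^ 2))
        - a * (X ^ 2 + Y ^ 2) * (b + (1 / 2) * a * (10 * X)) := by
  have hu : HasDerivAt (fun u : ℝ => u) 1 X := hasDerivAt_id X
  have h2 : HasDerivAt (fun u : ℝ => u ^ 2) (2 * X) X := by
    simpa using hasDerivAt_pow 2 X
  have P1 : HasDerivAt (fun u : ℝ => A * u + B * Y) (A * 1) X :=
    (hu.const_mul A).add_const (B * Y)
  have P2a : HasDerivAt (fun u : ℝ => a * (u ^ 2 + Y ^ 2)) (a * (2 * X)) X :=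
    (h2.add_const (Y ^ 2)).const_mul a
  have P2b : HasDerivAt (fun u : ℝ => C + b * u + (1 / 2) * a * (5 * u ^ 2 + Y ^ 2))
      (b * 1 + (1 / 2) * a * (5 * (2 * X))) X :=
    ((hu.const_mul b).const_add C).add (((h2.const_mul 5).add_const (Y ^ 2)).const_mul ((1 / 2) * a))
  have H := P1.sub (P2a.mul P2b)
  refine H.deriv.trans ?_; ring

lemma derivV2 (a b A B C X Y : ℝ) :
    deriv (fun v => A * X + B * v
        - a * (X ^ 2 + v ^ 2) * (C + b * X + (1 / 2) * a * (5 * X ^ 2 + v ^ 2))) Y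
      = B - a * (2 * Y) * (C + b * X + (1 / 2) * a * (5 * X ^ 2 + Y ^ 2))
        - a * (X ^ 2 + Y ^ 2) * ((1 / 2) * a * (2 * Y)) := by
  have hv : HasDerivAt (fun v : ℝ => v) 1 Y := hasDerivAt_id Y
  have h2 : HasDerivAt (fun v : ℝ => v ^ 2) (2 * Y) Y := by
    simpa using hasDerivAt_pow 2 Y
  have P1 : HasDerivAt (fun v : ℝ => A * X + B * v) (B * 1) Y :=
    (hv.const_mul B).const_add (A * X)
  have P2a : HasDerivAt (fun v : ℝ => a * (X ^ 2 + v ^ 2)) (a * (2 * Y)) Y :=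
    (h2.const_add (X ^ 2)).const_mul a
  have P2b : HasDerivAt (fun v : ℝ => C + b * X + (1 / 2) * a * (5 * X ^ 2 + v ^ 2))
      ((1 / 2) * a * (2 * Y)) Y :=
    ((h2.const_add (5 * X ^ 2)).const_mul ((1 / 2) * a)).const_add (C + b * X)
  have H := P1.sub (P2a.mul P2b)
  refine H.deriv.trans ?_; ring

/-- case 37, Euclidean plane: for the system `ẍ + Ωẏ = -V_x`,
`ÿ - Ωẋ = -V_y` with `V = Ax + By - a(x²+y²)[C + bx + ½a(5x²+y²)]` and
`Ω = 6ax + b`, the stated cubic expression `I` is a first integral. -/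
theorem case37_first_integral
    (a b A B C : ℝ) (x y : ℝ → ℝ)
    (hx : ContDiff ℝ 2 x) (hy : ContDiff ℝ 2 y)
    (heq1 : ∀ t, deriv (deriv x) t + (6 * a * x t + b) * deriv y t
      = - deriv (fun u => A * u + B * y t
          - a * (u ^ 2 + (y t) ^ 2) * (C + b * u + (1 / 2) * a * (5 * u ^ 2 + (y t) ^ 2)))
        (x t))
    (heq2 : ∀ t, deriv (deriv y) t - (6 * a * x t + b) * deriv x t
      = - deriv (fun v => A * x t + B * v
          - a * ((x t) ^ 2 + v ^ 2) * (C + b * x t + (1 / 2) * a * (5 * (x t) ^ 2 + v ^ 2)))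
        (y t)) :
    ∀ t, deriv (fun s =>
      a * (2 * (x s * deriv y s - y s * deriv x s)
            - (4 * a * x s + b) * ((x s) ^ 2 + (y s) ^ 2))
          * (deriv y s - C - b * x s - a * (3 * (x s) ^ 2 + (y s) ^ 2))
        + A * (deriv y s - b * x s - a * (3 * (x s) ^ 2 + (y s) ^ 2))
        - B * (deriv x s + y s * (b + 2 * a * x s))) t = 0 := by
  intro t
  have hx2 : ContDiff ℝ (1 + 1) x := by norm_num at hx ⊢; exact hx
  have hy2 : ContDiff ℝ (1 + 1) y := by norm_num at hy ⊢; exact hy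
  have hdx : Differentiable ℝ x := (contDiff_succ_iff_deriv.mp hx2).1
  have hdy : Differentiable ℝ y := (contDiff_succ_iff_deriv.mp hy2).1
  have hdx' : Differentiable ℝ (deriv x) :=
    (contDiff_succ_iff_deriv.mp hx2).2.2.differentiable one_ne_zero
  have hdy' : Differentiable ℝ (deriv y) :=
    (contDiff_succ_iff_deriv.mp hy2).2.2.differentiable one_ne_zero
  have hX : HasDerivAt x (deriv x t) t := (hdx t).hasDerivAt
  have hY : HasDerivAt y (deriv y t) t := (hdy t).hasDerivAt
  have hX' : HasDerivAt (deriv x) (deriv (deriv x) t) t := (hdx' t).hasDerivAt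
  have hY' : HasDerivAt (deriv y) (deriv (deriv y) t) t := (hdy' t).hasDerivAt
  have e1 : deriv (deriv x) t
      = - (6 * a * x t + b) * deriv y t
        - (A - a * (2 * x t) * (C + b * x t + (1 / 2) * a * (5 * (x t) ^ 2 + (y t) ^ 2))
          - a * ((x t) ^ 2 + (y t) ^ 2) * (b + (1 / 2) * a * (10 * x t))) := by
    have h := heq1 t
    rw [derivV1 a b A B C (y t) (x t)] at h
    linarith
  have e2 : deriv (deriv y) t
      = (6 * a * x t + b) * deriv x t
        - (B - a * (2 * y t) * (C + b * x t + (1 / 2) * a * (5 * (x t) ^ 2 + (y t) ^ 2))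
          - a * ((x t) ^ 2 + (y t) ^ 2) * ((1 / 2) * a * (2 * y t))) := by
    have h := heq2 t
    rw [derivV2 a b A B C (x t) (y t)] at h
    linarith
  have hP := (((hX.mul hY').sub (hY.mul hX')).const_mul 2).sub
    (((hX.const_mul (4 * a)).add_const b).mul ((hX.pow 2).add (hY.pow 2)))
  have hQ := ((hY'.sub_const C).sub (hX.const_mul b)).sub
    ((((hX.pow 2).const_mul 3).add (hY.pow 2)).const_mul a)
  have hR := (hY'.sub (hX.const_mul b)).sub
    ((((hX.pow 2).const_mul 3).add (hY.pow 2)).const_mul a)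
  have hS := hX'.add (hY.mul ((hX.const_mul (2 * a)).const_add b))
  have H := (((hP.const_mul a).mul hQ).add (hR.const_mul A)).sub (hS.const_mul B)
  refine H.deriv.trans ?_
  simp only [Pi.add_apply, Pi.sub_apply, Pi.mul_apply, Pi.pow_apply]
  rw [e1, e2]
  push_cast
  ring
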